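/- If ϱ > 1, then for every m ≥ 1 the loss probabilities satisfy lim_{n→∞} p_n = (ϱ − 1)/ϱ; in particular the limit does not depend on m. -/

import Mathlib

open MeasureTheory Filter Topology

open Finset in
set_option maxHeartbeats 1000000 in
private lemma abstract_limit (r p : ℕ → ℝ) (mb : ℝ)
    (hr : ∀ i, 0 ≤ r i) (hr0 : 0 < r 0)
    (hsum : HasSum r 1) (hmom : HasSum (fun i : ℕ => (i : ℝ) * r i) mb)
    (hmb : mb < 1)
    (hp0 : p 0 = 1)
    (hrec : ∀ l, p l = ∑ i ∈ Finset.range (l + 1), r i * p (l - i + 1)) :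
    Tendsto p atTop (𝓝 (1 / (1 - mb))) := by
  -- partial sums of r
  set F : ℕ → ℝ := fun N => ∑ i ∈ range (N + 1), r i with hF
  set mN : ℕ → ℝ := fun N => ∑ i ∈ range (N + 1), (i : ℝ) * r i with hmN
  set P : ℕ → ℝ := fun N => ∑ l ∈ range (N + 1), p l with hP
  have hFle : ∀ N, F N ≤ 1 := fun N => sum_le_hasSum _ (fun i _ => hr i) hsum
  -- monotonicity of p
  have mono_aux : ∀ n, ∀ j k, j ≤ k → k ≤ n → p j ≤ p k := by
    intro n
    induction n with
    | zero =>
      intro j k hjk hk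
      have hj : j = 0 := by omega
      have hk0 : k = 0 := by omega
      subst hj; subst hk0; exact le_rfl
    | succ n IH =>
      have hp1 : ∀ k ≤ n, 1 ≤ p k := by
        intro k hk
        have := IH 0 k (Nat.zero_le _) hk
        rwa [hp0] at this
      have hstep : p n ≤ p (n + 1) := by
        have h := hrec n
        rw [Finset.sum_range_succ'] at h
        simp only [Nat.sub_zero] at h
        have hsub : ∀ i ∈ range n, r (i + 1) * p (n - (i + 1) + 1) ≤ r (i + 1) * p n := by
          intro i hi
          have hi' : i < n := mem_range.1 hi
          have h1 : n - (i + 1) + 1 ≤ n := by omega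
          exact mul_le_mul_of_nonneg_left (IH _ _ h1 le_rfl) (hr _)
        have hsum1 : ∑ i ∈ range n, r (i + 1) * p (n - (i + 1) + 1)
            ≤ (∑ i ∈ range n, r (i + 1)) * p n := by
          rw [Finset.sum_mul]
          exact Finset.sum_le_sum hsub
        have hS : (∑ i ∈ range n, r (i + 1)) + r 0 = F n := by
          show _ = ∑ i ∈ range (n + 1), r i
          rw [Finset.sum_range_succ']
        have hpn1 : 1 ≤ p n := hp1 n le_rfl
        have : p n ≤ (F n - r 0) * p n + r 0 * p (n + 1) := by
          have h2 : (∑ i ∈ range n, r (i + 1)) = F n - r 0 := by linarith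
          rw [h2] at hsum1
          linarith [h, hsum1]
        have hFn := hFle n
        have : r 0 * p n ≤ r 0 * p (n + 1) := by nlinarith
        exact le_of_mul_le_mul_left this hr0
      intro j k hjk hk
      rcases Nat.lt_or_ge k (n + 1) with hk' | hk'
      · exact IH j k hjk (by omega)
      · have hkeq : k = n + 1 := by omega
        subst hkeq
        rcases Nat.lt_or_ge j (n + 1) with hj' | hj'
        · exact le_trans (IH j n (by omega) (by omega)) hstep
        · have : j = n + 1 := by omega
          subst this; exact le_rfl
  have mono : ∀ j k, j ≤ k → p j ≤ p k := fun j k h => mono_aux k j k h le_rfl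
  have hone : ∀ n, 1 ≤ p n := fun n => by
    have := mono 0 n (Nat.zero_le _); rwa [hp0] at this
  have hPsucc : ∀ k, P (k + 1) = P k + p (k + 1) := fun k => Finset.sum_range_succ p (k + 1)
  -- Identity (I)
  have hI : ∀ N, P N + F N = ∑ i ∈ range (N + 1), r i * P (N - i + 1) := by
    intro N
    induction N with
    | zero =>
      have h0 := hrec 0
      rw [Finset.sum_range_one] at h0 ⊢
      have hP1 : P 1 = p 0 + p 1 := by
        simp only [hP]
        rw [Finset.sum_range_succ, Finset.sum_range_one]
      have hP0 : P 0 = p 0 := by simp only [hP]; rw [Finset.sum_range_one]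
      have hF0 : F 0 = r 0 := by simp only [hF]; rw [Finset.sum_range_one]
      simp only [Nat.sub_zero] at h0 ⊢
      rw [hP1, hP0, hF0]
      rw [hp0] at h0 ⊢
      -- h0 : 1 = r 0 * p 1 ; goal : 1 + r 0 = r 0 * (1 + p 1)
      nlinarith [h0]
    | succ N IH =>
      have hFsucc : F (N + 1) = F N + r (N + 1) := Finset.sum_range_succ r (N + 1)
      have hsplit : ∑ i ∈ range (N + 2), r i * P (N + 1 - i + 1)
          = ∑ i ∈ range (N + 1), r i * P (N + 1 - i + 1) + r (N + 1) * P 1 := by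
        have h := Finset.sum_range_succ (fun i => r i * P (N + 1 - i + 1)) (N + 1)
        simpa using h
      have hcongr : ∑ i ∈ range (N + 1), r i * P (N + 1 - i + 1)
          = ∑ i ∈ range (N + 1), (r i * P (N - i + 1) + r i * p (N - i + 2)) := by
        apply Finset.sum_congr rfl
        intro i hi
        have hi' : i ≤ N := by have := mem_range.1 hi; omega
        have h1 : N + 1 - i + 1 = (N - i + 1) + 1 := by omega
        have h2 : N - i + 1 + 1 = N - i + 2 := by omega
        rw [h1, hPsucc (N - i + 1), h2, mul_add]
      have hr1 := hrec (N + 1)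
      rw [Finset.sum_range_succ] at hr1
      have hlast : N + 1 - (N + 1) + 1 = 1 := by omega
      rw [hlast] at hr1
      have hcong2 : ∑ i ∈ range (N + 1), r i * p (N + 1 - i + 1)
          = ∑ i ∈ range (N + 1), r i * p (N - i + 2) := by
        apply Finset.sum_congr rfl
        intro i hi
        have hi' : i ≤ N := by have := mem_range.1 hi; omega
        have : N + 1 - i + 1 = N - i + 2 := by omega
        rw [this]
      rw [hcong2] at hr1
      have hP1 : P 1 = 1 + p 1 := by
        simp only [hP]
        rw [Finset.sum_range_succ, Finset.sum_range_one, hp0]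
      rw [hsplit, hcongr, Finset.sum_add_distrib, ← IH, hPsucc N, hFsucc, hP1]
      linarith [hr1]
  -- inequality (C')
  have hC : ∀ N i, i ≤ N → P N + p N ≤ P (N - i + 1) + (i : ℝ) * p N := by
    intro N i
    induction i with
    | zero =>
      intro _
      rw [Nat.sub_zero, hPsucc N]
      have := mono N (N + 1) (by omega)
      push_cast
      linarith
    | succ j IH =>
      intro hj
      rcases Nat.eq_zero_or_pos j with rfl | hjpos
      · have h1 : N - 1 + 1 = N := by omega
        rw [h1]
        push_cast
        linarith [hone N]
      · have hIH := IH (by omega)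
        have h1 : N - j + 1 = (N - (j + 1) + 1) + 1 := by omega
        have h1' : N - (j + 1) + 1 + 1 = N - j + 1 := by omega
        have h2 : P (N - j + 1) = P (N - (j + 1) + 1) + p (N - j + 1) := by
          rw [h1, hPsucc, h1']
        have h3 : p (N - j + 1) ≤ p N := mono _ _ (by omega)
        push_cast
        push_cast at hIH
        linarith
  -- star inequality
  have hstar : ∀ N : ℕ, ((N : ℝ) + 1) * (1 - F N) + mN N ≤ mb := by
    intro N
    have hs1 : Summable r := hsum.summable
    have hs2 : Summable (fun i : ℕ => (i : ℝ) * r i) := hmom.summable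
    have hs1' : Summable (fun i => r (i + (N + 1))) := (summable_nat_add_iff (N + 1)).2 hs1
    have hs2' : Summable (fun i : ℕ => ((i + (N + 1) : ℕ) : ℝ) * r (i + (N + 1))) :=
      (summable_nat_add_iff (N + 1)).2 hs2
    have t1 : F N + ∑' i, r (i + (N + 1)) = 1 := by
      have h := Summable.sum_add_tsum_nat_add (f := r) (N + 1) hs1
      rw [hsum.tsum_eq] at h; exact h
    have t2 : mN N + ∑' i : ℕ, ((i + (N + 1) : ℕ) : ℝ) * r (i + (N + 1)) = mb := by
      have h := Summable.sum_add_tsum_nat_add (f := fun i : ℕ => (i : ℝ) * r i) (N + 1) hs2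
      rw [hmom.tsum_eq] at h; exact h
    have hle : ∑' i : ℕ, ((N : ℝ) + 1) * r (i + (N + 1))
        ≤ ∑' i : ℕ, ((i + (N + 1) : ℕ) : ℝ) * r (i + (N + 1)) := by
      refine Summable.tsum_le_tsum (fun i => ?_) (hs1'.mul_left _) hs2'
      refine mul_le_mul_of_nonneg_right ?_ (hr _)
      push_cast
      linarith [Nat.cast_nonneg (α := ℝ) i]
    rw [tsum_mul_left] at hle
    have e1 : ∑' i, r (i + (N + 1)) = 1 - F N := by linarith
    rw [e1] at hle
    linarith
  -- bound (B)
  have hB : ∀ N, (F N - mb) * p N ≤ F N := by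
    intro N
    have hIN := hI N
    have hsum_lb : ∑ i ∈ range (N + 1), r i * (P N + p N - (i : ℝ) * p N)
        ≤ ∑ i ∈ range (N + 1), r i * P (N - i + 1) := by
      apply Finset.sum_le_sum
      intro i hi
      have hi' : i ≤ N := by have := mem_range.1 hi; omega
      exact mul_le_mul_of_nonneg_left (by linarith [hC N i hi']) (hr i)
    have hexp : ∑ i ∈ range (N + 1), r i * (P N + p N - (i : ℝ) * p N)
        = F N * P N + F N * p N - mN N * p N := by
      have hc : ∀ i ∈ range (N + 1), r i * (P N + p N - (i : ℝ) * p N)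
          = (r i * P N + r i * p N) - ((i : ℝ) * r i) * p N := fun i _ => by ring
      rw [Finset.sum_congr rfl hc, Finset.sum_sub_distrib, Finset.sum_add_distrib,
        ← Finset.sum_mul, ← Finset.sum_mul, ← Finset.sum_mul]
    have key1 : F N * P N + F N * p N - mN N * p N ≤ P N + F N := by
      rw [← hexp]; rw [hIN]; exact hsum_lb
    have hPle : P N ≤ ((N : ℝ) + 1) * p N := by
      have h := Finset.sum_le_card_nsmul (range (N + 1)) p (p N)
        (fun l hl => mono l N (by have := mem_range.1 hl; omega))
      rw [Finset.card_range, nsmul_eq_mul] at h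
      simp only [hP]
      push_cast at h ⊢
      exact h
    have hFN := hFle N
    have hstarN := hstar N
    have hpN : 1 ≤ p N := hone N
    have h1 : (0:ℝ) ≤ 1 - F N := by linarith
    have key2 : P N - F N * P N ≤ mb * p N - mN N * p N := by
      have h2 : (1 - F N) * P N ≤ (1 - F N) * (((N : ℝ) + 1) * p N) :=
        mul_le_mul_of_nonneg_left hPle h1
      have h4 : ((1 - F N) * ((N : ℝ) + 1)) * p N ≤ (mb - mN N) * p N :=
        mul_le_mul_of_nonneg_right (by linarith) (by linarith)
      nlinarith [h2, h4]
    calc (F N - mb) * p N = (F N * P N + F N * p N - mN N * p N)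
          + (P N - F N * P N) - P N - (mb * p N - mN N * p N) + mb * p N - mb * p N := by ring
      _ ≤ F N := by linarith [key1, key2]

  -- F tends to 1
  have hFtendsto : Tendsto F atTop (𝓝 1) := by
    have h := hsum.tendsto_sum_nat
    exact h.comp (tendsto_add_atTop_nat 1)
  -- boundedness
  have hc1pos : (0:ℝ) < (1 - mb) / 2 := by linarith
  have hev : ∀ᶠ N in atTop, (1 + mb) / 2 ≤ F N :=
    hFtendsto.eventually (eventually_ge_nhds (by linarith))
  obtain ⟨N₀, hN₀⟩ := eventually_atTop.1 hev
  have hbdd : ∀ N, p N ≤ 1 / ((1 - mb) / 2) := by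
    intro N
    set M := max N N₀ with hM
    have h1 : (1 + mb) / 2 ≤ F M := hN₀ M (le_max_right _ _)
    have h2 := hB M
    have h3 := hFle M
    have h4 := hone M
    have h5 : (1 - mb) / 2 * p M ≤ 1 := by nlinarith
    have h6 : p M ≤ 1 / ((1 - mb) / 2) := by
      rw [le_div_iff₀ hc1pos]
      linarith
    exact le_trans (mono N M (le_max_left _ _)) h6
  have hmono : Monotone p := fun a b h => mono a b h
  have hbddabove : BddAbove (Set.range p) := ⟨1 / ((1 - mb) / 2), by
    rintro x ⟨n, rfl⟩; exact hbdd n⟩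
  set L : ℝ := ⨆ n, p n with hLdef
  have hpL : Tendsto p atTop (𝓝 L) := tendsto_atTop_ciSup hmono hbddabove
  have hple : ∀ n, p n ≤ L := fun n => le_ciSup hbddabove n
  have hL1 : (1:ℝ) ≤ L := le_trans (le_of_eq hp0.symm) (hple 0)
  have hL0 : (0:ℝ) ≤ L := by linarith
  -- upper bound
  have hupper : (1 - mb) * L ≤ 1 := by
    have ht : Tendsto (fun N => (F N - mb) * p N) atTop (𝓝 ((1 - mb) * L)) :=
      (hFtendsto.sub tendsto_const_nhds).mul hpL
    exact le_of_tendsto ht (Eventually.of_forall fun N => le_trans (hB N) (hFle N))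
  -- difference bounds
  have hPnonneg : ∀ N, (0:ℝ) ≤ P N :=
    fun N => Finset.sum_nonneg fun j _ => le_trans zero_le_one (hone j)
  have hPdiff : ∀ a b : ℕ, a ≤ b → (P b - P a ≤ ((b - a : ℕ) : ℝ) * L ∧ 0 ≤ P b - P a) := by
    intro a b hab
    have heq : P b - P a = ∑ j ∈ Finset.Ico (a + 1) (b + 1), p j := by
      rw [Finset.sum_Ico_eq_sub p (by omega)]
    constructor
    · rw [heq]
      have h := Finset.sum_le_card_nsmul (Finset.Ico (a + 1) (b + 1)) p L fun j _ => hple j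
      rw [Nat.card_Ico] at h
      have hcard : b + 1 - (a + 1) = b - a := by omega
      rw [hcard, nsmul_eq_mul] at h
      exact h
    · rw [heq]; exact Finset.sum_nonneg fun j _ => le_trans zero_le_one (hone j)
  -- difference limit
  have hdiffL : ∀ j : ℕ, Tendsto (fun N => P N - P (N - j)) atTop (𝓝 ((j : ℝ) * L)) := by
    intro j
    induction j with
    | zero =>
      simp only [Nat.sub_zero, sub_self, Nat.cast_zero, zero_mul]
      exact tendsto_const_nhds
    | succ j IH =>
      have hev2 : (fun N => (P N - P (N - j)) + p (N - j)) =ᶠ[atTop]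
          (fun N => P N - P (N - (j + 1))) := by
        filter_upwards [eventually_ge_atTop (j + 1)] with N hN
        have h1 : N - j = (N - (j + 1)) + 1 := by omega
        have h2 : P (N - j) = P (N - (j + 1)) + p (N - j) := by
          rw [h1, hPsucc, ← h1]
        rw [h2]; ring
      have hlim : Tendsto (fun N => (P N - P (N - j)) + p (N - j)) atTop
          (𝓝 ((j : ℝ) * L + L)) := IH.add (hpL.comp (tendsto_sub_atTop_nat j))
      have h3 := hlim.congr' hev2
      have : ((j : ℝ) + 1) * L = (j : ℝ) * L + L := by ring
      rw [Nat.cast_succ, this]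
      exact h3
  -- dominated convergence setup
  set g : ℕ → ℕ → ℝ := fun N i => if i ≤ N then r i * (P (N - i + 1) - P N) else 0 with hg
  have hgbound : ∀ N i, |g N i| ≤ r i * ((i : ℝ) + 1) * L := by
    intro N i
    by_cases hiN : i ≤ N
    · simp only [hg, if_pos hiN]
      rw [abs_mul, abs_of_nonneg (hr i)]
      have hLb : |P (N - i + 1) - P N| ≤ ((i : ℝ) + 1) * L := by
        rcases le_or_gt (N - i + 1) N with hle | hlt
        · obtain ⟨hub, hnn⟩ := hPdiff (N - i + 1) N hle
          rw [abs_sub_comm, abs_of_nonneg hnn]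
          refine le_trans hub (mul_le_mul_of_nonneg_right ?_ hL0)
          have hcard : (N - (N - i + 1)) ≤ i + 1 := by omega
          calc ((N - (N - i + 1) : ℕ) : ℝ) ≤ ((i + 1 : ℕ) : ℝ) := by exact_mod_cast hcard
            _ = (i : ℝ) + 1 := by push_cast; ring
        · have hi0 : N - i + 1 = N + 1 := by omega
          obtain ⟨hub, hnn⟩ := hPdiff N (N + 1) (by omega)
          rw [hi0, abs_of_nonneg hnn]
          refine le_trans hub (mul_le_mul_of_nonneg_right ?_ hL0)
          have h1 : N + 1 - N = 1 := by omega
          rw [h1]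
          push_cast
          linarith [Nat.cast_nonneg (α := ℝ) i]
      calc r i * |P (N - i + 1) - P N| ≤ r i * (((i : ℝ) + 1) * L) :=
            mul_le_mul_of_nonneg_left hLb (hr i)
        _ = r i * ((i : ℝ) + 1) * L := by ring
    · simp only [hg, if_neg hiN, abs_zero]
      have : (0:ℝ) ≤ (i : ℝ) + 1 := by positivity
      exact mul_nonneg (mul_nonneg (hr i) this) hL0
  have hgsummable : Summable (fun i : ℕ => r i * ((i : ℝ) + 1) * L) := by
    have hcg : (fun i : ℕ => r i * ((i : ℝ) + 1) * L)
        = fun i : ℕ => ((i : ℝ) * r i + r i) * L := by ext i; ring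
    rw [hcg]
    exact (hmom.summable.add hsum.summable).mul_right L
  have hglim : ∀ i : ℕ, Tendsto (fun N => g N i) atTop (𝓝 (r i * ((1 - (i : ℝ)) * L))) := by
    intro i
    rcases Nat.eq_zero_or_pos i with rfl | hipos
    · have hev3 : (fun N => r 0 * p (N + 1)) =ᶠ[atTop] fun N => g N 0 :=
        Eventually.of_forall fun N => by
          simp only [hg, if_pos (Nat.zero_le N), Nat.sub_zero, hPsucc N]
          ring
      have h1 : Tendsto (fun N => r 0 * p (N + 1)) atTop (𝓝 (r 0 * L)) :=
        (hpL.comp (tendsto_add_atTop_nat 1)).const_mul (r 0)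
      have h2 := h1.congr' hev3
      have : r 0 * L = r 0 * ((1 - ((0:ℕ) : ℝ)) * L) := by push_cast; ring
      rw [← this]
      exact h2
    · obtain ⟨j, rfl⟩ : ∃ j, i = j + 1 := ⟨i - 1, by omega⟩
      have hev4 : (fun N => -(r (j + 1) * (P N - P (N - j)))) =ᶠ[atTop]
          fun N => g N (j + 1) := by
        filter_upwards [eventually_ge_atTop (j + 1)] with N hN
        simp only [hg, if_pos (show j + 1 ≤ N from hN)]
        have h1 : N - (j + 1) + 1 = N - j := by omega
        rw [h1]; ring
      have h2 : Tendsto (fun N => -(r (j + 1) * (P N - P (N - j)))) atTop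
          (𝓝 (-(r (j + 1) * ((j : ℝ) * L)))) := ((hdiffL j).const_mul (r (j + 1))).neg
      have h3 := h2.congr' hev4
      have hval : r (j + 1) * ((1 - ((j + 1 : ℕ) : ℝ)) * L) = -(r (j + 1) * ((j : ℝ) * L)) := by
        push_cast; ring
      rw [hval]
      exact h3
  have hDCT := tendsto_tsum_of_dominated_convergence hgsummable hglim
    (Eventually.of_forall fun N i => by
      rw [Real.norm_eq_abs]; exact hgbound N i)
  have htsumval : ∑' i : ℕ, r i * ((1 - (i : ℝ)) * L) = (1 - mb) * L := by
    have h := (hsum.sub hmom).mul_right L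
    have hcong : (fun i : ℕ => (r i - (i : ℝ) * r i) * L)
        = fun i : ℕ => r i * ((1 - (i : ℝ)) * L) := by ext i; ring
    rw [hcong] at h
    exact h.tsum_eq
  have htsumeq : ∀ N, (∑' i, g N i) = ∑ i ∈ range (N + 1), r i * (P (N - i + 1) - P N) := by
    intro N
    rw [tsum_eq_sum (s := range (N + 1))
      (fun i hi => by
        simp only [hg, if_neg (show ¬ i ≤ N by
          intro hle; exact hi (mem_range.2 (by omega)))])]
    refine Finset.sum_congr rfl fun i hi => ?_
    simp only [hg, if_pos (show i ≤ N by have := mem_range.1 hi; omega)]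
  have hIIsum : ∀ N, ∑ i ∈ range (N + 1), r i * (P (N - i + 1) - P N)
      = F N + (1 - F N) * P N := by
    intro N
    have hc2 : ∀ i ∈ range (N + 1), r i * (P (N - i + 1) - P N)
        = r i * P (N - i + 1) - r i * P N := fun i _ => by ring
    rw [Finset.sum_congr rfl hc2, Finset.sum_sub_distrib, ← Finset.sum_mul, ← hI N]
    ring
  have hT2 : Tendsto (fun N => F N + (1 - F N) * P N) atTop (𝓝 ((1 - mb) * L)) := by
    rw [htsumval] at hDCT
    refine hDCT.congr fun N => ?_
    rw [htsumeq N, hIIsum N]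
  have hT3 : Tendsto (fun N => (1 - F N) * P N) atTop (𝓝 ((1 - mb) * L - 1)) := by
    have h := hT2.sub hFtendsto
    exact h.congr fun N => by ring
  have hlower : (0:ℝ) ≤ (1 - mb) * L - 1 :=
    ge_of_tendsto hT3 (Eventually.of_forall fun N =>
      mul_nonneg (by linarith [hFle N]) (hPnonneg N))
  have hLeq : L = 1 / (1 - mb) := by
    have h1 : (1 - mb) * L = 1 := le_antisymm hupper (by linarith)
    rw [eq_div_iff (show (1:ℝ) - mb ≠ 0 by intro h; rw [h] at h1; simp at h1)]
    linarith
  rw [← hLeq]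
  exact hpL

/-- If the load `ϱ = λ/(mμ) > 1`, then the loss probabilities `p_n = 1/π_n` of the
`GI/M/m/n` queue satisfy `lim_{n→∞} p_n = (ϱ - 1)/ϱ`, independently of `m`. -/
theorem loss_prob_limit_rho_gt_one
    (m : ℕ) (hm : 1 ≤ m) (μ : ℝ) (hμ : 0 < μ)
    (A : Measure ℝ) [IsProbabilityMeasure A]
    (hsupp : A {x | x < 0} = 0)
    (hint : Integrable (fun x => x) A)
    (hmean : 0 < ∫ x, x ∂A)
    (π : ℕ → ℝ) (hπ0 : π 0 = 1)
    (hrec : ∀ l, π l = ∑ i ∈ Finset.range (l + 1),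
      (∫ x, Real.exp (-(m * μ * x)) * (m * μ * x) ^ i / (Nat.factorial i) ∂A)
        * π (l - i + 1))
    (hϱ : 1 < (∫ x, x ∂A)⁻¹ / (m * μ)) :
    Tendsto (fun n => 1 / π n) atTop
      (𝓝 (((∫ x, x ∂A)⁻¹ / (m * μ) - 1) / ((∫ x, x ∂A)⁻¹ / (m * μ)))) := by
  set c : ℝ := (m : ℝ) * μ with hc
  have hm1 : (1 : ℝ) ≤ (m : ℝ) := by exact_mod_cast hm
  have hc0 : 0 < c := by rw [hc]; nlinarith
  set f : ℕ → ℝ → ℝ := fun i x => Real.exp (-(c * x)) * (c * x) ^ i / (Nat.factorial i : ℝ)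
    with hf
  set r : ℕ → ℝ := fun i => ∫ x, f i x ∂A with hrdef
  have hx0 : ∀ᵐ x ∂A, 0 ≤ x := by
    rw [ae_iff]
    simpa [not_le] using hsupp
  -- pointwise facts
  have hpt_nonneg : ∀ x : ℝ, 0 ≤ x → ∀ i, 0 ≤ f i x := by
    intro x hx i
    have hy : 0 ≤ c * x := mul_nonneg hc0.le hx
    exact div_nonneg (mul_nonneg (Real.exp_pos _).le (pow_nonneg hy i)) (Nat.cast_nonneg _)
  have hpt_le1 : ∀ x : ℝ, 0 ≤ x → ∀ i, f i x ≤ 1 := by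
    intro x hx i
    have hy : 0 ≤ c * x := mul_nonneg hc0.le hx
    have h1 : (c * x) ^ i / (Nat.factorial i : ℝ) ≤ Real.exp (c * x) := by
      have h2 := Real.sum_le_exp_of_nonneg hy (i + 1)
      have h3 : (c * x) ^ i / (Nat.factorial i : ℝ)
          ≤ ∑ k ∈ Finset.range (i + 1), (c * x) ^ k / (Nat.factorial k : ℝ) := by
        refine Finset.single_le_sum (f := fun k => (c * x) ^ k / (Nat.factorial k : ℝ))
          (fun k _ => ?_) (Finset.self_mem_range_succ i)
        exact div_nonneg (pow_nonneg hy k) (Nat.cast_nonneg _)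
      linarith
    have heq : f i x = (c * x) ^ i / (Nat.factorial i : ℝ) * Real.exp (-(c * x)) := by
      simp only [hf]; ring
    rw [heq]
    calc (c * x) ^ i / (Nat.factorial i : ℝ) * Real.exp (-(c * x))
        ≤ Real.exp (c * x) * Real.exp (-(c * x)) :=
          mul_le_mul_of_nonneg_right h1 (Real.exp_pos _).le
      _ = 1 := by rw [← Real.exp_add]; simp
  have hmeas : ∀ i, AEStronglyMeasurable (f i) A := by
    intro i
    apply Continuous.aestronglyMeasurable
    simp only [hf]
    fun_prop
  have hf_nonneg : ∀ i, ∀ᵐ x ∂A, 0 ≤ f i x := fun i =>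
    hx0.mono fun x hx => hpt_nonneg x hx i
  have hf_le1 : ∀ i, ∀ᵐ x ∂A, f i x ≤ 1 := fun i =>
    hx0.mono fun x hx => hpt_le1 x hx i
  have hint_f : ∀ i, Integrable (f i) A := by
    intro i
    refine Integrable.mono' (integrable_const 1) (hmeas i) ?_
    filter_upwards [hf_nonneg i, hf_le1 i] with x h0 h1
    rw [Real.norm_eq_abs, abs_of_nonneg h0]; exact h1
  have hr_nonneg : ∀ i, 0 ≤ r i := fun i => integral_nonneg_of_ae (hf_nonneg i)
  -- positivity of r 0
  have hr0pos : 0 < r 0 := by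
    have he : ∀ x : ℝ, f 0 x = Real.exp (-(c * x)) := by
      intro x; simp [hf]
    have he2 : r 0 = ∫ x, Real.exp (-(c * x)) ∂A := by
      rw [hrdef]; exact integral_congr_ae (Eventually.of_forall he)
    rw [he2]
    rw [integral_pos_iff_support_of_nonneg (fun x => (Real.exp_pos _).le)
      ((hint_f 0).congr (Eventually.of_forall he))]
    have hsup : Function.support (fun x : ℝ => Real.exp (-(c * x))) = Set.univ :=
      Set.eq_univ_of_forall fun x => (Real.exp_pos _).ne'
    rw [hsup]
    simp
  -- pointwise HasSum facts
  have hexp_sum : ∀ x : ℝ, HasSum (fun n : ℕ => (c * x) ^ n / (Nat.factorial n : ℝ))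
      (Real.exp (c * x)) := by
    intro x
    rw [Real.exp_eq_exp_ℝ]
    exact NormedSpace.expSeries_div_hasSum_exp (c * x)
  have hps1 : ∀ x : ℝ, HasSum (fun i => f i x) 1 := by
    intro x
    have h2 := (hexp_sum x).mul_left (Real.exp (-(c * x)))
    have hfe : (fun n : ℕ => Real.exp (-(c * x)) * ((c * x) ^ n / (Nat.factorial n : ℝ)))
        = fun n => f n x := by
      funext n; simp only [hf]; ring
    rw [hfe] at h2
    have hval : Real.exp (-(c * x)) * Real.exp (c * x) = 1 := by
      rw [← Real.exp_add]; simp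
    rwa [hval] at h2
  have hps2 : ∀ x : ℝ, HasSum (fun i : ℕ => (i : ℝ) * f i x) (c * x) := by
    intro x
    have h3 := (hexp_sum x).mul_left (c * x)
    set u : ℕ → ℝ := fun n => (n : ℝ) * ((c * x) ^ n / (Nat.factorial n : ℝ)) with hu
    have hfe : (fun n : ℕ => (c * x) * ((c * x) ^ n / (Nat.factorial n : ℝ)))
        = fun n => u (n + 1) := by
      funext n
      simp only [hu]
      rw [Nat.factorial_succ]
      have hfac : ((Nat.factorial n : ℝ)) ≠ 0 := by
        exact_mod_cast (Nat.factorial_pos n).ne'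
      push_cast
      field_simp
      ring
    rw [hfe] at h3
    have h4 := (hasSum_nat_add_iff (f := u) 1).1 h3
    have h5 : ∑ i ∈ Finset.range 1, u i = 0 := by simp [hu]
    rw [h5, add_zero] at h4
    have h6 := h4.mul_left (Real.exp (-(c * x)))
    have hfe2 : (fun n : ℕ => Real.exp (-(c * x)) * u n) = fun n : ℕ => (n : ℝ) * f n x := by
      funext n; simp only [hu, hf]; ring
    rw [hfe2] at h6
    have hval : Real.exp (-(c * x)) * (c * x * Real.exp (c * x)) = c * x := by
      rw [show Real.exp (-(c * x)) * (c * x * Real.exp (c * x))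
        = c * x * (Real.exp (-(c * x)) * Real.exp (c * x)) by ring, ← Real.exp_add]
      simp
    rwa [hval] at h6
  -- HasSum r 1
  have hparts1 : ∀ N : ℕ, ∑ i ∈ Finset.range N, r i = ∫ x, (∑ i ∈ Finset.range N, f i x) ∂A :=
    fun N => (integral_finset_sum _ fun i _ => hint_f i).symm
  have hbd1 : ∀ N : ℕ, ∀ᵐ x ∂A, ‖∑ i ∈ Finset.range N, f i x‖ ≤ 1 := by
    intro N
    filter_upwards [hx0] with x hx
    have h0 : 0 ≤ ∑ i ∈ Finset.range N, f i x :=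
      Finset.sum_nonneg fun i _ => hpt_nonneg x hx i
    have h1 : ∑ i ∈ Finset.range N, f i x ≤ 1 :=
      sum_le_hasSum _ (fun i _ => hpt_nonneg x hx i) (hps1 x)
    rw [Real.norm_eq_abs, abs_of_nonneg h0]; exact h1
  have htend1 : Tendsto (fun N => ∑ i ∈ Finset.range N, r i) atTop (𝓝 1) := by
    have hdct := tendsto_integral_of_dominated_convergence (μ := A)
      (F := fun N x => ∑ i ∈ Finset.range N, f i x) (f := fun _ => (1 : ℝ))
      (fun _ => (1 : ℝ))
      (fun N => (integrable_finset_sum _ fun i _ => hint_f i).aestronglyMeasurable)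
      (integrable_const 1)
      hbd1
      (Eventually.of_forall fun x => (hps1 x).tendsto_sum_nat)
    have hone : ∫ _x, (1 : ℝ) ∂A = 1 := by simp
    rw [hone] at hdct
    refine hdct.congr fun N => (hparts1 N).symm
  have hsum_r : HasSum r 1 := by
    have hsumm : Summable r := by
      apply summable_of_sum_range_le hr_nonneg
      intro N
      rw [hparts1 N]
      calc ∫ x, (∑ i ∈ Finset.range N, f i x) ∂A ≤ ∫ _x, (1:ℝ) ∂A := by
            refine integral_mono_ae (integrable_finset_sum _ fun i _ => hint_f i)
              (integrable_const 1) ?_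
            filter_upwards [hbd1 N] with x hx
            exact le_trans (le_abs_self _) (by rwa [Real.norm_eq_abs] at hx)
        _ = 1 := by simp
    have h := hsumm.hasSum
    rwa [tendsto_nhds_unique h.tendsto_sum_nat htend1] at h
  -- HasSum moments
  have hint_if : ∀ i : ℕ, Integrable (fun x => (i : ℝ) * f i x) A :=
    fun i => (hint_f i).const_mul _
  have hparts2 : ∀ N : ℕ, ∑ i ∈ Finset.range N, (i : ℝ) * r i
      = ∫ x, (∑ i ∈ Finset.range N, (i : ℝ) * f i x) ∂A := by
    intro N
    rw [integral_finset_sum _ fun i _ => hint_if i]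
    refine Finset.sum_congr rfl fun i _ => ?_
    rw [integral_const_mul]
  have hbd2 : ∀ N : ℕ, ∀ᵐ x ∂A, ‖∑ i ∈ Finset.range N, (i : ℝ) * f i x‖ ≤ c * x := by
    intro N
    filter_upwards [hx0] with x hx
    have hterm : ∀ i : ℕ, 0 ≤ (i : ℝ) * f i x :=
      fun i => mul_nonneg (Nat.cast_nonneg _) (hpt_nonneg x hx i)
    have h0 : 0 ≤ ∑ i ∈ Finset.range N, (i : ℝ) * f i x :=
      Finset.sum_nonneg fun i _ => hterm i
    have h1 : ∑ i ∈ Finset.range N, (i : ℝ) * f i x ≤ c * x :=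
      sum_le_hasSum _ (fun i _ => hterm i) (hps2 x)
    rw [Real.norm_eq_abs, abs_of_nonneg h0]; exact h1
  have hint_cx : Integrable (fun x : ℝ => c * x) A := hint.const_mul c
  have htend2 : Tendsto (fun N => ∑ i ∈ Finset.range N, (i : ℝ) * r i) atTop
      (𝓝 (c * ∫ x, x ∂A)) := by
    have hdct := tendsto_integral_of_dominated_convergence (μ := A)
      (F := fun N x => ∑ i ∈ Finset.range N, (i : ℝ) * f i x) (f := fun x => c * x)
      (fun x => c * x)
      (fun N => (integrable_finset_sum _ fun i _ => hint_if i).aestronglyMeasurable)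
      hint_cx
      hbd2
      (Eventually.of_forall fun x => (hps2 x).tendsto_sum_nat)
    rw [integral_const_mul] at hdct
    refine hdct.congr fun N => (hparts2 N).symm
  have hmom_r : HasSum (fun i : ℕ => (i : ℝ) * r i) (c * ∫ x, x ∂A) := by
    have hsumm : Summable (fun i : ℕ => (i : ℝ) * r i) := by
      apply summable_of_sum_range_le
        (fun i => mul_nonneg (Nat.cast_nonneg _) (hr_nonneg i))
      intro N
      rw [hparts2 N]
      refine integral_mono_ae (integrable_finset_sum _ fun i _ => hint_if i) hint_cx ?_
      filter_upwards [hbd2 N] with x hx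
      exact le_trans (le_abs_self _) (by rwa [Real.norm_eq_abs] at hx)
    have h := hsumm.hasSum
    rwa [tendsto_nhds_unique h.tendsto_sum_nat htend2] at h
  -- load condition
  set X : ℝ := ∫ x, x ∂A with hX
  have hmb_lt : c * X < 1 := by
    rw [lt_div_iff₀ hc0, one_mul] at hϱ
    have h1 : c * X < X⁻¹ * X := mul_lt_mul_of_pos_right hϱ hmean
    rwa [inv_mul_cancel₀ hmean.ne'] at h1
  -- apply the abstract lemma
  have hrec' : ∀ l, π l = ∑ i ∈ Finset.range (l + 1), r i * π (l - i + 1) := fun l => hrec l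
  have habs := abstract_limit r π (c * X) hr_nonneg hr0pos hsum_r hmom_r hmb_lt hπ0 hrec'
  -- convert to the target statement
  have h1mb : 0 < 1 - c * X := by linarith
  have hval : (X⁻¹ / c - 1) / (X⁻¹ / c) = 1 - c * X := by
    field_simp
  rw [hval]
  have hne : (1 : ℝ) / (1 - c * X) ≠ 0 := by positivity
  have hinv := habs.inv₀ hne
  rw [one_div, inv_inv] at hinv
  exact hinv.congr fun n => (one_div (π n)).symm
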